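/- Let K be a commutative ring with identity, let A be an associative K-algebra (not necessarily commutative or unital), and let B be a two-sided ideal of A. If both B and the quotient algebra A/B are finitely presented as K-algebras, then A is finitely presented as a K-algebra. -/

import Mathlib

set_option linter.unusedSectionVars false
set_option linter.unusedVariables false
set_option maxHeartbeats 1000000


/-- The free non-unital associative `K`-algebra on `X`: the semigroup algebra of the free
semigroup `X⁺` over `K`. -/
abbrev FreeNUAlg (K X : Type*) [CommRing K] : Type _ := MonoidAlgebra K (FreeSemigroup X)

/-- The two-sided ideal (as a `K`-submodule closed under left and right multiplication)
generated by a set in a non-unital `K`-algebra. -/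
def idealSpan (K : Type*) {A : Type*} [CommRing K] [NonUnitalRing A] [Module K A]
    (s : Set A) : Submodule K A :=
  sInf {J : Submodule K A | s ⊆ J ∧ ∀ a b : A, b ∈ J → a * b ∈ J ∧ b * a ∈ J}

/-- A non-unital `K`-algebra is finitely generated if some finite subset generates it as a
`K`-algebra. -/
def NUAlgFG (K A : Type*) [CommRing K] [NonUnitalRing A] [Module K A]
    [IsScalarTower K A A] [SMulCommClass K A A] : Prop :=
  ∃ s : Finset A, NonUnitalAlgebra.adjoin K (s : Set A) = ⊤

/-- A non-unital `K`-algebra is finitely presented if it is isomorphic to the quotient of a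
free algebra `K⟨X⟩` on a finite set `X` by a finitely generated two-sided ideal, i.e. there
is a surjection from some `K⟨X⟩`, `X` finite, whose kernel is a finitely generated
two-sided ideal. -/
def NUAlgFP (K A : Type*) [CommRing K] [NonUnitalRing A] [Module K A]
    [IsScalarTower K A A] [SMulCommClass K A A] : Prop :=
  ∃ (n : ℕ) (f : FreeNUAlg K (Fin n) →ₙₐ[K] A),
    Function.Surjective f ∧
      ∃ s : Finset (FreeNUAlg K (Fin n)),
        ∀ x, f x = 0 ↔ x ∈ idealSpan K (s : Set (FreeNUAlg K (Fin n)))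

section Aux
variable {K : Type*} [CommRing K] {ι : Type*}
variable {A : Type*} [NonUnitalRing A] [Module K A] [IsScalarTower K A A] [SMulCommClass K A A]

/-- generator -/
noncomputable def FPgen (K : Type*) [CommRing K] {ι : Type*} (i : ι) : FreeNUAlg K ι :=
  MonoidAlgebra.single (FreeSemigroup.of i) 1

/-- lift of a map on generators -/
noncomputable def FPlift (q : ι → A) : FreeNUAlg K ι →ₙₐ[K] A :=
  MonoidAlgebra.liftMagma K (FreeSemigroup.lift q)

@[simp] lemma FPlift_single (q : ι → A) (w : FreeSemigroup ι) (k : K) :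
    FPlift q (MonoidAlgebra.single w k) = k • FreeSemigroup.lift q w := by
  simp [FPlift, MonoidAlgebra.liftMagma_apply_apply]

@[simp] lemma FPlift_gen (q : ι → A) (i : ι) : FPlift q (FPgen K i) = q i := by
  simp [FPgen]

lemma FPsingle_mul (x : ι) (y : FreeSemigroup ι) :
    (MonoidAlgebra.single (FreeSemigroup.of x * y) 1 : FreeNUAlg K ι) =
      FPgen K x * MonoidAlgebra.single y 1 := by
  rw [FPgen, MonoidAlgebra.single_mul_single, one_mul]

lemma FPhom_ext {φ ψ : FreeNUAlg K ι →ₙₐ[K] A} (h : ∀ i, φ (FPgen K i) = ψ (FPgen K i)) :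
    φ = ψ := by
  apply MonoidAlgebra.nonUnitalAlgHom_ext
  intro x
  induction x with
  | ih1 i => exact h i
  | ih2 x y hx hy => rw [FPsingle_mul, map_mul, map_mul, hy, h x]

/-- linear map underlying a non-unital algebra hom -/
noncomputable def FPnlin (φ : FreeNUAlg K ι →ₙₐ[K] A) : FreeNUAlg K ι →ₗ[K] A :=
  { toFun := φ, map_add' := map_add φ, map_smul' := map_smul φ }

@[simp] lemma FPnlin_apply (φ : FreeNUAlg K ι →ₙₐ[K] A) (x) : FPnlin φ x = φ x := rfl

lemma FPmono_span {P : Submodule K (FreeNUAlg K ι)}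
    (h : ∀ w : FreeSemigroup ι, (MonoidAlgebra.single w 1 : FreeNUAlg K ι) ∈ P)
    (x : FreeNUAlg K ι) : x ∈ P := by
  induction x using MonoidAlgebra.induction_linear with
  | zero => exact P.zero_mem
  | add a b ha hb => exact P.add_mem ha hb
  | single w r =>
      have : (MonoidAlgebra.single w r : FreeNUAlg K ι) = r • MonoidAlgebra.single w 1 := by
        rw [MonoidAlgebra.smul_single', mul_one]
      show (MonoidAlgebra.single w r : FreeNUAlg K ι) ∈ P
      rw [this]; exact P.smul_mem _ (h w)

variable {A' : Type*} [NonUnitalRing A'] [Module K A']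

lemma subset_idealSpan (s : Set A') : s ⊆ idealSpan K s := fun x hx =>
  Submodule.mem_sInf.2 fun _ hJ => hJ.1 hx

lemma idealSpan_mul_left {s : Set A'} (a : A') {b : A'} (h : b ∈ idealSpan K s) :
    a * b ∈ idealSpan K s :=
  Submodule.mem_sInf.2 fun J hJ => (hJ.2 a b (Submodule.mem_sInf.1 h J hJ)).1

lemma idealSpan_mul_right {s : Set A'} (a : A') {b : A'} (h : b ∈ idealSpan K s) :
    b * a ∈ idealSpan K s :=
  Submodule.mem_sInf.2 fun J hJ => (hJ.2 a b (Submodule.mem_sInf.1 h J hJ)).2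

lemma idealSpan_le {s : Set A'} {J : Submodule K A'} (h1 : s ⊆ J)
    (h2 : ∀ a b : A', b ∈ J → a * b ∈ J ∧ b * a ∈ J) : idealSpan K s ≤ J :=
  sInf_le ⟨h1, h2⟩

end Aux


/-- Let `K` be a commutative ring with identity, `A` an associative
`K`-algebra (not necessarily commutative or unital) and `B` a two-sided ideal of `A`
(a `K`-subalgebra closed under left and right multiplication by arbitrary elements of `A`).
If `B` is finitely presented as a `K`-algebra, and the quotient algebra `A/B` — realized as
any `K`-algebra `C` together with a surjective homomorphism `A → C` with kernel `B` — is
finitely presented as a `K`-algebra, then `A` is finitely presented as a `K`-algebra. -/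
theorem fp_of_ideal_fp_of_quotient_fp
    (K A C : Type*) [CommRing K]
    [NonUnitalRing A] [Module K A] [IsScalarTower K A A] [SMulCommClass K A A]
    [NonUnitalRing C] [Module K C] [IsScalarTower K C C] [SMulCommClass K C C]
    (B : NonUnitalSubalgebra K A)
    (hBl : ∀ a b : A, b ∈ B → a * b ∈ B) (hBr : ∀ a b : A, b ∈ B → b * a ∈ B)
    (f : A →ₙₐ[K] C) (hf : Function.Surjective f) (hker : ∀ x : A, f x = 0 ↔ x ∈ B)
    (hBfp : NUAlgFP K B) (hCfp : NUAlgFP K C) :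
    NUAlgFP K A := by
  classical
  obtain ⟨m, g, hg, T, hT⟩ := hBfp
  obtain ⟨n, h, hh, S, hS⟩ := hCfp
  -- inclusions of free algebras
  let ιX : FreeNUAlg K (Fin m) →ₙₐ[K] FreeNUAlg K (Fin (m + n)) :=
    FPlift fun i => FPgen K (Fin.castAdd n i)
  let ιY : FreeNUAlg K (Fin n) →ₙₐ[K] FreeNUAlg K (Fin (m + n)) :=
    FPlift fun j => FPgen K (Fin.natAdd m j)
  have hιXgen : ∀ i, ιX (FPgen K i) = FPgen K (Fin.castAdd n i) := fun i => FPlift_gen _ i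
  have hιYgen : ∀ j, ιY (FPgen K j) = FPgen K (Fin.natAdd m j) := fun j => FPlift_gen _ j
  -- generator images in A
  choose pC hpC using fun j => hf (h (FPgen K j))
  set p : Fin (m + n) → A := Fin.addCases (fun i => (g (FPgen K i) : A)) pC with hp
  set π : FreeNUAlg K (Fin (m + n)) →ₙₐ[K] A := FPlift p with hπdef
  have hπgenX : ∀ i, π (FPgen K (Fin.castAdd n i)) = (g (FPgen K i) : A) := by
    intro i; rw [hπdef, FPlift_gen, hp]; exact Fin.addCases_left i
  have hπgenY : ∀ j, π (FPgen K (Fin.natAdd m j)) = pC j := by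
    intro j; rw [hπdef, FPlift_gen, hp]; exact Fin.addCases_right j
  have hπX : ∀ x, π (ιX x) = (g x : A) := by
    have : π.comp ιX = (NonUnitalSubalgebraClass.subtype B).comp g := by
      apply FPhom_ext
      intro i
      simp only [NonUnitalAlgHom.comp_apply, hιXgen, hπgenX]
      rfl
    intro x; exact DFunLike.congr_fun this x
  have hπY : ∀ x, f (π (ιY x)) = h x := by
    have : f.comp (π.comp ιY) = h := by
      apply FPhom_ext
      intro j
      simp only [NonUnitalAlgHom.comp_apply, hιYgen, hπgenY, hpC]
    intro x; exact DFunLike.congr_fun this x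
  -- a section of g
  choose liftB hliftB using hg
  -- relation elements
  set relS : FreeNUAlg K (Fin n) → FreeNUAlg K (Fin (m + n)) := fun s =>
    if hs : π (ιY s) ∈ B then ιY s - ιX (liftB ⟨π (ιY s), hs⟩) else 0 with hrelS
  set u : Fin m → Fin n → FreeNUAlg K (Fin m) := fun i j =>
    liftB ⟨pC j * (g (FPgen K i) : A), hBl _ _ (g (FPgen K i)).2⟩ with hu
  set v : Fin m → Fin n → FreeNUAlg K (Fin m) := fun i j =>
    liftB ⟨(g (FPgen K i) : A) * pC j, hBr _ _ (g (FPgen K i)).2⟩ with hv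
  set relYX : Fin m × Fin n → FreeNUAlg K (Fin (m + n)) := fun q =>
    FPgen K (Fin.natAdd m q.2) * FPgen K (Fin.castAdd n q.1) - ιX (u q.1 q.2) with hrelYX
  set relXY : Fin m × Fin n → FreeNUAlg K (Fin (m + n)) := fun q =>
    FPgen K (Fin.castAdd n q.1) * FPgen K (Fin.natAdd m q.2) - ιX (v q.1 q.2) with hrelXY
  set R : Finset (FreeNUAlg K (Fin (m + n))) :=
    ((T.image ιX ∪ S.image relS) ∪ Finset.univ.image relYX) ∪ Finset.univ.image relXY with hR
  set I : Submodule K (FreeNUAlg K (Fin (m + n))) :=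
    idealSpan K (R : Set (FreeNUAlg K (Fin (m + n)))) with hI
  -- memberships of relations in I
  have hRI : ∀ x ∈ R, x ∈ I := fun x hx => subset_idealSpan _ (Finset.mem_coe.2 hx)
  have hTI : ∀ t ∈ T, ιX t ∈ I := fun t ht => hRI _ (by
    rw [hR]; simp only [Finset.mem_union, Finset.mem_image]
    exact Or.inl (Or.inl (Or.inl ⟨t, ht, rfl⟩)))
  have hSI : ∀ s ∈ S, relS s ∈ I := fun s hs => hRI _ (by
    rw [hR]; simp only [Finset.mem_union, Finset.mem_image]
    exact Or.inl (Or.inl (Or.inr ⟨s, hs, rfl⟩)))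
  have hYXI : ∀ i j, relYX (i, j) ∈ I := fun i j => hRI _ (by
    rw [hR]; simp only [Finset.mem_union, Finset.mem_image, Finset.mem_univ, true_and]
    exact Or.inl (Or.inr ⟨(i, j), rfl⟩))
  have hXYI : ∀ i j, relXY (i, j) ∈ I := fun i j => hRI _ (by
    rw [hR]; simp only [Finset.mem_union, Finset.mem_image, Finset.mem_univ, true_and]
    exact Or.inr ⟨(i, j), rfl⟩)
  -- values of π on relations
  have hgcoe : ∀ (a : A) (ha : a ∈ B), (g (liftB ⟨a, ha⟩) : A) = a := by
    intro a ha; rw [hliftB]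
  have hπT : ∀ t ∈ T, π (ιX t) = 0 := by
    intro t ht
    rw [hπX, (hT t).2 (subset_idealSpan _ (Finset.mem_coe.2 ht)), ZeroMemClass.coe_zero]
  have hπS : ∀ s, π (relS s) = 0 := by
    intro s
    rw [hrelS]
    by_cases hs : π (ιY s) ∈ B
    · simp only [dif_pos hs, map_sub, hπX, hgcoe, sub_self]
    · simp only [dif_neg hs, map_zero]
  have hπYX : ∀ i j, π (relYX (i, j)) = 0 := by
    intro i j
    rw [hrelYX]
    simp only [map_sub, map_mul, hπgenX, hπgenY, hπX, hu, hgcoe, sub_self]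
  have hπXY : ∀ i j, π (relXY (i, j)) = 0 := by
    intro i j
    rw [hrelXY]
    simp only [map_sub, map_mul, hπgenX, hπgenY, hπX, hv, hgcoe, sub_self]
  have hIker : ∀ x ∈ I, π x = 0 := by
    have hle : I ≤ LinearMap.ker (FPnlin π) := by
      rw [hI]
      apply idealSpan_le
      · intro r hr
        rw [Finset.mem_coe, hR] at hr
        simp only [Finset.mem_union, Finset.mem_image, Finset.mem_univ, true_and] at hr
        show π r = 0
        rcases hr with ((⟨t, ht, rfl⟩ | ⟨s, hs, rfl⟩) | ⟨q, rfl⟩) | ⟨q, rfl⟩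
        · exact hπT t ht
        · exact hπS s
        · exact hπYX q.1 q.2
        · exact hπXY q.1 q.2
      · intro a b hb
        rw [LinearMap.mem_ker, FPnlin_apply] at hb
        constructor <;> rw [LinearMap.mem_ker, FPnlin_apply, map_mul, hb] <;> simp
    intro x hx
    have := hle hx
    rwa [LinearMap.mem_ker, FPnlin_apply] at this
  -- the submodule M = range ιX ⊔ I
  set RX : Submodule K (FreeNUAlg K (Fin (m + n))) := LinearMap.range (FPnlin ιX) with hRX
  set RY : Submodule K (FreeNUAlg K (Fin (m + n))) := LinearMap.range (FPnlin ιY) with hRY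
  set M : Submodule K (FreeNUAlg K (Fin (m + n))) := RX ⊔ I with hM
  have hMX : ∀ b, ιX b ∈ M := fun b => Submodule.mem_sup_left ⟨b, rfl⟩
  have hMI : ∀ x ∈ I, x ∈ M := fun x hx => Submodule.mem_sup_right hx
  have keyYX : ∀ (i : Fin m) (j : Fin n),
      FPgen K (Fin.natAdd m j) * FPgen K (Fin.castAdd n i) = relYX (i, j) + ιX (u i j) := by
    intro i j; rw [hrelYX]; rw [sub_add_cancel]
  have keyXY : ∀ (i : Fin m) (j : Fin n),
      FPgen K (Fin.castAdd n i) * FPgen K (Fin.natAdd m j) = relXY (i, j) + ιX (v i j) := by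
    intro i j; rw [hrelXY]; rw [sub_add_cancel]
  -- A1 : gen_Y * (range ιX) ⊆ M
  have A1 : ∀ (j : Fin n) (b : FreeNUAlg K (Fin m)), FPgen K (Fin.natAdd m j) * ιX b ∈ M := by
    intro j b
    have key : ∀ w : FreeSemigroup (Fin m),
        (MonoidAlgebra.single w 1 : FreeNUAlg K (Fin m)) ∈
          Submodule.comap ((LinearMap.mulLeft K (FPgen K (Fin.natAdd m j))).comp (FPnlin ιX)) M := by
      intro w
      induction w with
      | ih1 i =>
          simp only [Submodule.mem_comap, LinearMap.comp_apply, FPnlin_apply,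
            LinearMap.mulLeft_apply]
          rw [show (MonoidAlgebra.single (FreeSemigroup.of i) (1 : K)) = FPgen K i from rfl,
            hιXgen, keyYX]
          exact M.add_mem (hMI _ (hYXI i j)) (hMX _)
      | ih2 x y hx hy =>
          simp only [Submodule.mem_comap, LinearMap.comp_apply, FPnlin_apply,
            LinearMap.mulLeft_apply]
          rw [FPsingle_mul, map_mul, hιXgen, ← mul_assoc, keyYX, add_mul]
          refine M.add_mem (hMI _ (idealSpan_mul_right _ (hYXI x j))) ?_
          rw [← map_mul]
          exact hMX _
    exact FPmono_span key b
  -- A2 : gen * M ⊆ M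
  have A2 : ∀ (i : Fin (m + n)) (x : FreeNUAlg K (Fin (m + n))), x ∈ M → FPgen K i * x ∈ M := by
    intro i x hx
    rcases Submodule.mem_sup.1 hx with ⟨y, ⟨b, rfl⟩, z, hz, rfl⟩
    rw [mul_add]
    refine M.add_mem ?_ (hMI _ (idealSpan_mul_left _ hz))
    show FPgen K i * ιX b ∈ M
    induction i using Fin.addCases with
    | left i' => rw [← hιXgen, ← map_mul]; exact hMX _
    | right j => exact A1 j b
  -- A3 : (range ιX) * gen_Y ⊆ M
  have A3 : ∀ (j : Fin n) (b : FreeNUAlg K (Fin m)), ιX b * FPgen K (Fin.natAdd m j) ∈ M := by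
    intro j b
    have key : ∀ w : FreeSemigroup (Fin m),
        (MonoidAlgebra.single w 1 : FreeNUAlg K (Fin m)) ∈
          Submodule.comap ((LinearMap.mulRight K (FPgen K (Fin.natAdd m j))).comp (FPnlin ιX)) M := by
      intro w
      induction w with
      | ih1 i =>
          simp only [Submodule.mem_comap, LinearMap.comp_apply, FPnlin_apply,
            LinearMap.mulRight_apply]
          rw [show (MonoidAlgebra.single (FreeSemigroup.of i) (1 : K)) = FPgen K i from rfl,
            hιXgen, keyXY]
          exact M.add_mem (hMI _ (hXYI i j)) (hMX _)
      | ih2 x y hx hy =>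
          simp only [Submodule.mem_comap, LinearMap.comp_apply, FPnlin_apply,
            LinearMap.mulRight_apply] at hy ⊢
          rw [FPsingle_mul, map_mul, hιXgen, mul_assoc]
          exact A2 _ _ hy
    exact FPmono_span key b
  -- A4 : M * gen ⊆ M
  have A4 : ∀ (i : Fin (m + n)) (x : FreeNUAlg K (Fin (m + n))), x ∈ M → x * FPgen K i ∈ M := by
    intro i x hx
    rcases Submodule.mem_sup.1 hx with ⟨y, ⟨b, rfl⟩, z, hz, rfl⟩
    rw [add_mul]
    refine M.add_mem ?_ (hMI _ (idealSpan_mul_right _ hz))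
    show ιX b * FPgen K i ∈ M
    induction i using Fin.addCases with
    | left i' => rw [← hιXgen, ← map_mul]; exact hMX _
    | right j => exact A3 j b
  -- A5/A6 : monomial * M ⊆ M, M * monomial ⊆ M
  have A5 : ∀ (w : FreeSemigroup (Fin (m + n))) (x : FreeNUAlg K (Fin (m + n))), x ∈ M →
      (MonoidAlgebra.single w 1 : FreeNUAlg K (Fin (m + n))) * x ∈ M := by
    intro w
    induction w with
    | ih1 i => exact A2 i
    | ih2 i y hi hy =>
        intro x hx
        rw [FPsingle_mul, mul_assoc]
        exact A2 i _ (hy x hx)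
  have A6 : ∀ (w : FreeSemigroup (Fin (m + n))) (x : FreeNUAlg K (Fin (m + n))), x ∈ M →
      x * (MonoidAlgebra.single w 1 : FreeNUAlg K (Fin (m + n))) ∈ M := by
    intro w
    induction w with
    | ih1 i => exact A4 i
    | ih2 i y hi hy =>
        intro x hx
        rw [FPsingle_mul, ← mul_assoc]
        exact hy _ (A4 i x hx)
  -- A7 : M is a two-sided ideal
  have A7l : ∀ (a x : FreeNUAlg K (Fin (m + n))), x ∈ M → a * x ∈ M := by
    intro a x hx
    exact FPmono_span (P := Submodule.comap (LinearMap.mulRight K x) M)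
      (fun w => A5 w x hx) a
  have A7r : ∀ (a x : FreeNUAlg K (Fin (m + n))), x ∈ M → x * a ∈ M := by
    intro a x hx
    exact FPmono_span (P := Submodule.comap (LinearMap.mulLeft K x) M)
      (fun w => A6 w x hx) a
  -- N = range ιY ⊔ M = ⊤
  set N : Submodule K (FreeNUAlg K (Fin (m + n))) := RY ⊔ M with hN
  have hNtop : ∀ x : FreeNUAlg K (Fin (m + n)), x ∈ N := by
    apply FPmono_span
    intro w
    induction w with
    | ih1 i =>
        show FPgen K i ∈ N
        induction i using Fin.addCases with
        | left i' =>
            rw [← hιXgen]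
            exact Submodule.mem_sup_right (hMX _)
        | right j =>
            rw [← hιYgen]
            exact Submodule.mem_sup_left ⟨FPgen K j, rfl⟩
    | ih2 i y hi hy =>
        clear hi
        rw [FPsingle_mul]
        rcases Submodule.mem_sup.1 hy with ⟨yc, ⟨c, rfl⟩, z, hz, hsum⟩
        rw [← hsum, mul_add]
        refine N.add_mem ?_ (Submodule.mem_sup_right (A2 i _ hz))
        show FPgen K i * ιY c ∈ N
        induction i using Fin.addCases with
        | left i' =>
            rw [← hιXgen]
            exact Submodule.mem_sup_right (A7r _ _ (hMX _))
        | right j =>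
            rw [← hιYgen, ← map_mul]
            exact Submodule.mem_sup_left ⟨_, rfl⟩
  -- surjectivity of π
  have hπsurj : Function.Surjective π := by
    intro a
    obtain ⟨c, hc⟩ := hh (f a)
    have h1 : f (a - π (ιY c)) = 0 := by rw [map_sub, hπY, hc, sub_self]
    refine ⟨ιY c + ιX (liftB ⟨a - π (ιY c), (hker _).1 h1⟩), ?_⟩
    rw [map_add, hπX, hliftB]
    simp
  refine ⟨m + n, π, hπsurj, R, fun x => ⟨?_, fun hx => hIker x hx⟩⟩
  intro hx0
  show x ∈ I
  obtain ⟨yc, ⟨c, rfl⟩, z, hz, rfl⟩ := Submodule.mem_sup.1 (hNtop x)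
  obtain ⟨xb, ⟨b, rfl⟩, w, hw, rfl⟩ := Submodule.mem_sup.1 hz
  -- hx0 : π (ιY c + (ιX b + w)) = 0
  have hfb : f (π (ιX b)) = 0 := by rw [hπX]; exact (hker _).2 (g b).2
  have hc0 : h c = 0 := by
    have e1 : π (FPnlin ιY c + (FPnlin ιX b + w)) = π (ιY c) + (g b : A) := by
      rw [map_add, map_add, hIker w hw, add_zero]
      rw [show π (FPnlin ιX b) = ((g b : A)) from hπX b]
      rfl
    have h2 : f (π (ιY c)) + f ((g b : A)) = 0 := by
      rw [← map_add, ← e1, hx0, map_zero]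
    rw [hπY c] at h2
    rw [show f ((g b : A)) = 0 from (hker _).2 (g b).2, add_zero] at h2
    exact h2
  have hcI : c ∈ idealSpan K (S : Set (FreeNUAlg K (Fin n))) := (hS c).1 hc0
  have hYM : ιY c ∈ M := by
    have hle : idealSpan K (S : Set (FreeNUAlg K (Fin n))) ≤ Submodule.comap (FPnlin ιY) M := by
      apply idealSpan_le
      · intro s hs
        rw [Finset.mem_coe] at hs
        have hs0 : h s = 0 := (hS s).2 (subset_idealSpan _ (Finset.mem_coe.2 hs))
        have hsB : π (ιY s) ∈ B := (hker _).1 (by rw [hπY, hs0])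
        show ιY s ∈ M
        have heq : ιY s = relS s + ιX (liftB ⟨π (ιY s), hsB⟩) := by
          rw [hrelS]; simp only [dif_pos hsB]; rw [sub_add_cancel]
        rw [heq]
        exact M.add_mem (hMI _ (hSI s hs)) (hMX _)
      · intro a b hb
        rw [Submodule.mem_comap, FPnlin_apply] at hb
        constructor <;> rw [Submodule.mem_comap, FPnlin_apply, map_mul]
        · exact A7l _ _ hb
        · exact A7r _ _ hb
    have := hle hcI
    rwa [Submodule.mem_comap, FPnlin_apply] at this
  have hxM : (FPnlin ιY c + (FPnlin ιX b + w)) ∈ M :=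
    M.add_mem hYM (M.add_mem (hMX b) (hMI w hw))
  obtain ⟨xb', ⟨b', hb'⟩, w', hw', hsum⟩ := Submodule.mem_sup.1 hxM
  have hb'0 : g b' = 0 := by
    have hπsum : π xb' + π w' = 0 := by
      rw [← map_add, hsum]; exact hx0
    have hπxb : π xb' = (g b' : A) := by
      rw [← hb']; exact hπX b'
    rw [hπxb, hIker w' hw', add_zero] at hπsum
    exact Subtype.ext hπsum
  have hb'T : b' ∈ idealSpan K (T : Set (FreeNUAlg K (Fin m))) := (hT b').1 hb'0
  have hXI : ιX b' ∈ I := by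
    have hle : idealSpan K (T : Set (FreeNUAlg K (Fin m))) ≤ Submodule.comap (FPnlin ιX) I := by
      apply idealSpan_le
      · intro t ht
        rw [Finset.mem_coe] at ht
        show ιX t ∈ I
        exact hTI t ht
      · intro a b hb
        rw [Submodule.mem_comap, FPnlin_apply] at hb
        constructor <;> rw [Submodule.mem_comap, FPnlin_apply, map_mul]
        · exact idealSpan_mul_left _ hb
        · exact idealSpan_mul_right _ hb
    have := hle hb'T
    rwa [Submodule.mem_comap, FPnlin_apply] at this
  rw [← hsum, ← hb']
  exact I.add_mem hXI hw'
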